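/- Monotonicity of principal eigenvalues: let X be a compact interval, k : X×X → ℝ continuous positive, and U, U' : X → ℝ bounded measurable with U ≤ U'. Suppose (λ, φ) and (λ', φ') are eigenpairs with φ, φ' continuous and strictly positive satisfying φ(x) − ∫_X k(x,y) e^{−U(y)} φ(y) dy = λ φ(x) and φ'(x) − ∫_X k(x,y) e^{−U'(y)} φ'(y) dy = λ' φ'(x) for all x ∈ X. Then λ ≤ λ'. -/

import Mathlib

open MeasureTheory Real Set

lemma stmt11_integ (A : ℝ) (k : ℝ → ℝ) (V ψ : ℝ → ℝ)
    (hk : ContinuousOn k (Set.Icc 0 A))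
    (hVm : Measurable V) (hVb : ∃ C, ∀ x, |V x| ≤ C)
    (hψ : ContinuousOn ψ (Set.Icc 0 A)) :
    IntegrableOn (fun y => k y * Real.exp (-(V y)) * ψ y) (Set.Icc 0 A) := by
  obtain ⟨C, hC⟩ := hVb
  obtain ⟨Mk, hMk⟩ := isCompact_Icc.exists_bound_of_continuousOn hk
  obtain ⟨Mψ, hMψ⟩ := isCompact_Icc.exists_bound_of_continuousOn hψ
  have hsm : AEStronglyMeasurable (fun y => k y * Real.exp (-(V y)) * ψ y)
      (volume.restrict (Set.Icc 0 A)) :=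
    ((hk.aestronglyMeasurable measurableSet_Icc).mul
      ((hVm.neg.exp).aestronglyMeasurable.restrict)).mul
      (hψ.aestronglyMeasurable measurableSet_Icc)
  refine Integrable.mono' (g := fun _ => Mk * Real.exp C * Mψ)
    (integrableOn_const measure_Icc_lt_top.ne) hsm ?_
  refine (ae_restrict_iff' measurableSet_Icc).2 (ae_of_all _ fun y hy => ?_)
  have h1 : |k y| ≤ Mk := by simpa using hMk y hy
  have h2 : Real.exp (-(V y)) ≤ Real.exp C :=
    Real.exp_le_exp.2 (by linarith [(abs_le.1 (hC y)).1])
  have h3 : |ψ y| ≤ Mψ := by simpa using hMψ y hy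
  have : ‖k y * Real.exp (-(V y)) * ψ y‖ = |k y| * Real.exp (-(V y)) * |ψ y| := by
    rw [norm_mul, norm_mul, Real.norm_eq_abs, Real.norm_eq_abs, Real.norm_eq_abs,
      abs_of_pos (Real.exp_pos _)]
  rw [this]
  have h0 : (0:ℝ) ≤ |k y| := abs_nonneg _
  have h0' : (0:ℝ) ≤ |ψ y| := abs_nonneg _
  have he : (0:ℝ) ≤ Real.exp (-(V y)) := (Real.exp_pos _).le
  have hkM : 0 ≤ Mk := h0.trans h1
  have h12 : |k y| * Real.exp (-(V y)) ≤ Mk * Real.exp C := mul_le_mul h1 h2 he hkM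
  exact mul_le_mul h12 h3 h0' (mul_nonneg hkM (he.trans h2))

/-- Monotonicity of principal eigenvalues: if `U ≤ U'` and `(lam, φ)`, `(lam', φ')`
are positive eigenpairs of the operators with kernels `k(x,y)e^{−U(y)}` and
`k(x,y)e^{−U'(y)}` respectively, then `lam ≤ lam'`. -/
theorem stmt11 (A : ℝ) (hA : 0 < A) (k : ℝ → ℝ → ℝ) (U U' φ φ' : ℝ → ℝ) (lam lam' : ℝ)
    (hkc : ContinuousOn (fun q : ℝ × ℝ => k q.1 q.2) (Set.Icc 0 A ×ˢ Set.Icc 0 A))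
    (hkpos : ∀ x ∈ Set.Icc (0:ℝ) A, ∀ y ∈ Set.Icc (0:ℝ) A, 0 < k x y)
    (hUm : Measurable U) (hU'm : Measurable U')
    (hUb : ∃ C, ∀ x, |U x| ≤ C) (hU'b : ∃ C, ∀ x, |U' x| ≤ C)
    (hle : ∀ x, U x ≤ U' x)
    (hφc : ContinuousOn φ (Set.Icc 0 A)) (hφpos : ∀ x ∈ Set.Icc (0:ℝ) A, 0 < φ x)
    (hφ'c : ContinuousOn φ' (Set.Icc 0 A)) (hφ'pos : ∀ x ∈ Set.Icc (0:ℝ) A, 0 < φ' x)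
    (heig : ∀ x ∈ Set.Icc (0:ℝ) A,
      φ x - (∫ y in Set.Icc (0:ℝ) A, k x y * Real.exp (-(U y)) * φ y) = lam * φ x)
    (heig' : ∀ x ∈ Set.Icc (0:ℝ) A,
      φ' x - (∫ y in Set.Icc (0:ℝ) A, k x y * Real.exp (-(U' y)) * φ' y) = lam' * φ' x) :
    lam ≤ lam' := by
  have hne : (Set.Icc (0:ℝ) A).Nonempty := ⟨0, left_mem_Icc.2 hA.le⟩
  have hratio : ContinuousOn (fun x => φ x / φ' x) (Set.Icc 0 A) :=
    hφc.div hφ'c fun y hy => (hφ'pos y hy).ne'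
  obtain ⟨x0, hx0, hmin⟩ := isCompact_Icc.exists_isMinOn hne hratio
  set ε := φ x0 / φ' x0 with hεdef
  have hε : 0 < ε := div_pos (hφpos x0 hx0) (hφ'pos x0 hx0)
  have key : ∀ y ∈ Set.Icc (0:ℝ) A, ε * φ' y ≤ φ y := by
    intro y hy
    have := hmin hy
    exact (le_div_iff₀ (hφ'pos y hy)).1 this
  have hkx0 : ContinuousOn (fun y => k x0 y) (Set.Icc 0 A) :=
    hkc.comp ((Continuous.prodMk_right x0).continuousOn) (fun y hy => Set.mk_mem_prod hx0 hy)
  have hint1 : IntegrableOn (fun y => k x0 y * Real.exp (-(U y)) * φ y) (Set.Icc 0 A) :=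
    stmt11_integ A (fun y => k x0 y) U φ hkx0 hUm hUb hφc
  have hint2 : IntegrableOn (fun y => k x0 y * Real.exp (-(U' y)) * φ' y) (Set.Icc 0 A) :=
    stmt11_integ A (fun y => k x0 y) U' φ' hkx0 hU'm hU'b hφ'c
  have hint2' : IntegrableOn (fun y => ε * (k x0 y * Real.exp (-(U' y)) * φ' y))
      (Set.Icc 0 A) := hint2.const_mul ε
  have hptwise : ∀ y ∈ Set.Icc (0:ℝ) A,
      ε * (k x0 y * Real.exp (-(U' y)) * φ' y) ≤ k x0 y * Real.exp (-(U y)) * φ y := by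
    intro y hy
    have hk0 : 0 < k x0 y := hkpos x0 hx0 y hy
    have he : Real.exp (-(U' y)) ≤ Real.exp (-(U y)) := Real.exp_le_exp.2 (by linarith [hle y])
    have hφ'y : 0 < φ' y := hφ'pos y hy
    have hkey := key y hy
    calc ε * (k x0 y * Real.exp (-(U' y)) * φ' y)
        = k x0 y * Real.exp (-(U' y)) * (ε * φ' y) := by ring
      _ ≤ k x0 y * Real.exp (-(U y)) * φ y := by
          have h12 : Real.exp (-(U' y)) * (ε * φ' y) ≤ Real.exp (-(U y)) * φ y :=
            mul_le_mul he hkey (by positivity) (Real.exp_pos _).le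
          rw [mul_assoc, mul_assoc]
          exact mul_le_mul_of_nonneg_left h12 hk0.le
  have hmono : (∫ y in Set.Icc (0:ℝ) A, ε * (k x0 y * Real.exp (-(U' y)) * φ' y))
      ≤ ∫ y in Set.Icc (0:ℝ) A, k x0 y * Real.exp (-(U y)) * φ y :=
    setIntegral_mono_on hint2' hint1 measurableSet_Icc hptwise
  have hL : (∫ y in Set.Icc (0:ℝ) A, ε * (k x0 y * Real.exp (-(U' y)) * φ' y))
      = ε * (φ' x0 - lam' * φ' x0) := by
    rw [integral_const_mul]
    congr 1
    have := heig' x0 hx0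
    linarith
  have hR : (∫ y in Set.Icc (0:ℝ) A, k x0 y * Real.exp (-(U y)) * φ y)
      = φ x0 - lam * φ x0 := by
    have := heig x0 hx0
    linarith
  rw [hL, hR] at hmono
  have hεφ : ε * φ' x0 = φ x0 := div_mul_cancel₀ _ (hφ'pos x0 hx0).ne'
  have hφ0 : 0 < φ x0 := hφpos x0 hx0
  have h1 : ε * (φ' x0 - lam' * φ' x0) = φ x0 - lam' * φ x0 := by
    rw [mul_sub, hεφ, ← mul_assoc, mul_comm ε lam', mul_assoc, hεφ]
  exact le_of_mul_le_mul_right (by linarith) hφ0
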